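/- For every separability-preserving superchannel Θ taking bipartite channels on AB to bipartite channels on A'B', and for every bipartite quantum channel N from A₀B₀ to A₁B₁, the standard robustness satisfies R_s(Θ[N]) ≤ R_s(N) and the generalized robustness satisfies R(Θ[N]) ≤ R(N). -/

import Mathlib

open scoped BigOperators Kronecker ComplexOrder
open Matrix Filter

noncomputable section

namespace DynEnt

/-- A (not necessarily linear) map between matrix spaces. -/
abbrev MatMap (ι₀ ι₁ : Type) : Type := Matrix ι₀ ι₀ ℂ → Matrix ι₁ ι₁ ℂ

/-- The map `L ⊗ id_ρ`, acting trivially on a reference system indexed by `ρ`. -/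
def tensorIdT {ι₀ ι₁ ρ : Type} (L : MatMap ι₀ ι₁)
    (X : Matrix (ι₀ × ρ) (ι₀ × ρ) ℂ) : Matrix (ι₁ × ρ) (ι₁ × ρ) ℂ :=
  Matrix.of fun p q => L (Matrix.of fun i j => X (i, p.2) (j, q.2)) p.1 q.1

def IsLinearFun {ι₀ ι₁ : Type} (L : MatMap ι₀ ι₁) : Prop :=
  ∀ (c : ℂ) (X Y : Matrix ι₀ ι₀ ℂ), L (c • X + Y) = c • L X + L Y

def IsCompletelyPositive {ι₀ ι₁ : Type} [Fintype ι₀] [Fintype ι₁] (L : MatMap ι₀ ι₁) : Prop :=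
  ∀ (r : ℕ) (X : Matrix (ι₀ × Fin r) (ι₀ × Fin r) ℂ), X.PosSemidef → (tensorIdT L X).PosSemidef

def IsTracePreserving {ι₀ ι₁ : Type} [Fintype ι₀] [Fintype ι₁] (L : MatMap ι₀ ι₁) : Prop :=
  ∀ X, (L X).trace = X.trace

/-- A quantum channel: a linear, completely positive, trace-preserving map. -/
def IsChannel {ι₀ ι₁ : Type} [Fintype ι₀] [Fintype ι₁] (L : MatMap ι₀ ι₁) : Prop :=
  IsLinearFun L ∧ IsCompletelyPositive L ∧ IsTracePreserving L

/-- Tensor product of two matrix maps, defined on matrix units and extended linearly. -/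
def tensorMap {α₀ α₁ β₀ β₁ : Type} [Fintype α₀] [DecidableEq α₀] [Fintype β₀] [DecidableEq β₀]
    (LA : MatMap α₀ α₁) (LB : MatMap β₀ β₁) : MatMap (α₀ × β₀) (α₁ × β₁) :=
  fun X => ∑ i : α₀, ∑ j : α₀, ∑ k : β₀, ∑ l : β₀,
    X (i, k) (j, l) • (LA (Matrix.single i j 1) ⊗ₖ LB (Matrix.single k l 1))

/-- Separable bipartite channel (cut `α : β`). -/
def IsSepChannel {α₀ β₀ α₁ β₁ : Type}
    [Fintype α₀] [DecidableEq α₀] [Fintype β₀] [DecidableEq β₀] [Fintype α₁] [Fintype β₁]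
    (N : MatMap (α₀ × β₀) (α₁ × β₁)) : Prop :=
  IsChannel N ∧ ∃ (n : ℕ) (LA : Fin n → MatMap α₀ α₁) (LB : Fin n → MatMap β₀ β₁),
    (∀ k, IsLinearFun (LA k) ∧ IsCompletelyPositive (LA k) ∧
          IsLinearFun (LB k) ∧ IsCompletelyPositive (LB k)) ∧
    ∀ X, N X = ∑ k, tensorMap (LA k) (LB k) X

/-- The square root of a positive semidefinite matrix, as `Matrix.PosSemidef.sqrt` was defined in the older Mathlib. -/
def psdSqrt {ι : Type} [Fintype ι] [DecidableEq ι] {A : Matrix ι ι ℂ} (hA : A.PosSemidef) :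
    Matrix ι ι ℂ :=
  (hA.1.eigenvectorUnitary : Matrix ι ι ℂ) *
    Matrix.diagonal ((↑) ∘ (fun x : ℝ => Real.sqrt x) ∘ hA.1.eigenvalues) *
    (star hA.1.eigenvectorUnitary : Matrix ι ι ℂ)

/-- Trace norm `‖X‖₁ = tr √(X† X)`. -/
def traceNorm {ι : Type} [Fintype ι] [DecidableEq ι] (X : Matrix ι ι ℂ) : ℝ :=
  (psdSqrt (Matrix.posSemidef_conjTranspose_mul_self X)).trace.re

/-- Density matrix. -/
def IsState {ι : Type} [Fintype ι] (ρ : Matrix ι ι ℂ) : Prop :=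
  ρ.PosSemidef ∧ ρ.trace = 1

/-- Pure state (rank-one density matrix). -/
def IsPureState {ι : Type} [Fintype ι] (ρ : Matrix ι ι ℂ) : Prop :=
  ∃ v : ι → ℂ, (∑ i, Complex.normSq (v i)) = 1 ∧
    ρ = Matrix.vecMulVec v (fun i => star (v i))

/-- Diamond norm. -/
def diamondNorm {ι₀ ι₁ : Type} [Fintype ι₀] [Fintype ι₁] [DecidableEq ι₁]
    (L : MatMap ι₀ ι₁) : ℝ :=
  sSup { t : ℝ | ∃ (r : ℕ) (ρ : Matrix (ι₀ × Fin r) (ι₀ × Fin r) ℂ),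
    ρ.PosSemidef ∧ ρ.trace = 1 ∧ t = traceNorm (tensorIdT L ρ) }

section Bipartite

variable {α₀ β₀ α₁ β₁ α₀' β₀' α₁' β₁' : Type}
variable [Fintype α₀] [DecidableEq α₀] [Fintype β₀] [DecidableEq β₀]
variable [Fintype α₁] [DecidableEq α₁] [Fintype β₁] [DecidableEq β₁]
variable [Fintype α₀'] [DecidableEq α₀'] [Fintype β₀'] [DecidableEq β₀']
variable [Fintype α₁'] [DecidableEq α₁'] [Fintype β₁'] [DecidableEq β₁']

/-- Standard robustness w.r.t. separable channels. -/
def stdRobustness (N : MatMap (α₀ × β₀) (α₁ × β₁)) : ℝ :=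
  sInf { s : ℝ | 0 ≤ s ∧ ∃ M : MatMap (α₀ × β₀) (α₁ × β₁), IsSepChannel M ∧
    IsSepChannel (fun X => (1 + s)⁻¹ • (N X + s • M X)) }

/-- Generalized robustness w.r.t. separable channels. -/
def genRobustness (N : MatMap (α₀ × β₀) (α₁ × β₁)) : ℝ :=
  sInf { s : ℝ | 0 ≤ s ∧ ∃ M : MatMap (α₀ × β₀) (α₁ × β₁), IsChannel M ∧
    IsSepChannel (fun X => (1 + s)⁻¹ • (N X + s • M X)) }

/-- Standard log-robustness. -/
def LRs (N : MatMap (α₀ × β₀) (α₁ × β₁)) : ℝ := Real.logb 2 (1 + stdRobustness N)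

/-- Generalized log-robustness. -/
def LRgen (N : MatMap (α₀ × β₀) (α₁ × β₁)) : ℝ := Real.logb 2 (1 + genRobustness N)

/-- Smooth standard log-robustness. -/
def smoothLRs (ε : ℝ) (N : MatMap (α₀ × β₀) (α₁ × β₁)) : ℝ :=
  sInf { t : ℝ | ∃ N' : MatMap (α₀ × β₀) (α₁ × β₁), IsChannel N' ∧
    (1/2) * diamondNorm (fun X => N' X - N X) ≤ ε ∧ t = LRs N' }

/-- Smooth generalized log-robustness. -/
def smoothLRgen (ε : ℝ) (N : MatMap (α₀ × β₀) (α₁ × β₁)) : ℝ :=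
  sInf { t : ℝ | ∃ N' : MatMap (α₀ × β₀) (α₁ × β₁), IsChannel N' ∧
    (1/2) * diamondNorm (fun X => N' X - N X) ≤ ε ∧ t = LRgen N' }

end Bipartite

/-- A superchannel, given by pre- and post-processing channels with a memory system `Fin e`. -/
structure Superchannel (α₀ β₀ α₁ β₁ α₀' β₀' α₁' β₁' : Type)
    [Fintype α₀] [Fintype β₀] [Fintype α₁] [Fintype β₁]
    [Fintype α₀'] [Fintype β₀'] [Fintype α₁'] [Fintype β₁'] : Type where
  e : ℕ
  pre : MatMap (α₀' × β₀') ((α₀ × β₀) × Fin e)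
  post : MatMap ((α₁ × β₁) × Fin e) (α₁' × β₁')
  pre_channel : IsChannel pre
  post_channel : IsChannel post

section Super

variable {α₀ β₀ α₁ β₁ α₀' β₀' α₁' β₁' : Type}
variable [Fintype α₀] [DecidableEq α₀] [Fintype β₀] [DecidableEq β₀]
variable [Fintype α₁] [DecidableEq α₁] [Fintype β₁] [DecidableEq β₁]
variable [Fintype α₀'] [DecidableEq α₀'] [Fintype β₀'] [DecidableEq β₀']
variable [Fintype α₁'] [DecidableEq α₁'] [Fintype β₁'] [DecidableEq β₁']

/-- Action of a superchannel on a channel: `Θ[E] = post ∘ (E ⊗ id) ∘ pre`. -/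
def Superchannel.apply (Θ : Superchannel α₀ β₀ α₁ β₁ α₀' β₀' α₁' β₁')
    (E : MatMap (α₀ × β₀) (α₁ × β₁)) : MatMap (α₀' × β₀') (α₁' × β₁') :=
  fun X => Θ.post (tensorIdT E (Θ.pre X))

/-- Separability-preserving superchannel. -/
def IsSEPPSC (Θ : Superchannel α₀ β₀ α₁ β₁ α₀' β₀' α₁' β₁') : Prop :=
  ∀ M : MatMap (α₀ × β₀) (α₁ × β₁), IsSepChannel M → IsSepChannel (Θ.apply M)

/-- δ-separability-preserving superchannel. -/
def IsDeltaSEPPSC (δ : ℝ) (Θ : Superchannel α₀ β₀ α₁ β₁ α₀' β₀' α₁' β₁') : Prop :=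
  ∀ M : MatMap (α₀ × β₀) (α₁ × β₁), IsSepChannel M → genRobustness (Θ.apply M) ≤ δ

end Super

/-- The swap unitary `F = Σ |ij⟩⟨ji|` on `ℂ^K ⊗ ℂ^K`. -/
def swapMatrix (K : ℕ) : Matrix (Fin K × Fin K) (Fin K × Fin K) ℂ :=
  Matrix.of fun p q => if p.1 = q.2 ∧ p.2 = q.1 then 1 else 0

/-- The `K`-swap channel `X ↦ F X F†`. -/
def swapChannel (K : ℕ) : MatMap (Fin K × Fin K) (Fin K × Fin K) :=
  fun X => swapMatrix K * X * (swapMatrix K)ᴴ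

/-- The density matrix of the `K`-maximally entangled state inside `ℂ^{dA} ⊗ ℂ^{dB}`. -/
def maxEntangled (dA dB K : ℕ) : Matrix (Fin dA × Fin dB) (Fin dA × Fin dB) ℂ :=
  Matrix.of fun p q =>
    if (p.1 : ℕ) = (p.2 : ℕ) ∧ (q.1 : ℕ) = (q.2 : ℕ) ∧ (p.1 : ℕ) < K ∧ (q.1 : ℕ) < K
    then (1 / K : ℂ) else 0

/-- Separable bipartite state. -/
def IsSepState {ιA ιB : Type} [Fintype ιA] [Fintype ιB]
    (σ : Matrix (ιA × ιB) (ιA × ιB) ℂ) : Prop :=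
  ∃ (n : ℕ) (p : Fin n → ℝ) (φ : Fin n → ιA → ℂ) (ψ : Fin n → ιB → ℂ),
    (∀ a, 0 ≤ p a) ∧ (∑ a, p a) = 1 ∧
    (∀ a, (∑ i, Complex.normSq (φ a i)) = 1) ∧
    (∀ a, (∑ i, Complex.normSq (ψ a i)) = 1) ∧
    σ = ∑ a, (p a : ℂ) •
      (Matrix.vecMulVec (φ a) (fun i => star (φ a i)) ⊗ₖ
       Matrix.vecMulVec (ψ a) (fun i => star (ψ a i)))

/-- Input state `Φ^{a₀}_{A₀Ã₀} ⊗ Φ^{b₀}_{B₀B̃₀}` for the Choi matrix, with index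
grouping `(A₀ × B₀) × (Ã₀ × B̃₀)`. -/
def choiInput (a₀ b₀ : ℕ) :
    Matrix ((Fin a₀ × Fin b₀) × (Fin a₀ × Fin b₀)) ((Fin a₀ × Fin b₀) × (Fin a₀ × Fin b₀)) ℂ :=
  Matrix.of fun p q =>
    maxEntangled a₀ a₀ a₀ (p.1.1, p.2.1) (q.1.1, q.2.1) *
    maxEntangled b₀ b₀ b₀ (p.1.2, p.2.2) (q.1.2, q.2.2)

/-- Normalized Choi matrix of a bipartite channel. -/
def choiBi {a₀ b₀ : ℕ} {ι₁ : Type} (E : MatMap (Fin a₀ × Fin b₀) ι₁) :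
    Matrix (ι₁ × (Fin a₀ × Fin b₀)) (ι₁ × (Fin a₀ × Fin b₀)) ℂ :=
  tensorIdT E (choiInput a₀ b₀)

/-- Normalized Choi matrix of a single-system channel. -/
def choi1 {d : ℕ} {ι₁ : Type} (N : MatMap (Fin d) ι₁) :
    Matrix (ι₁ × Fin d) (ι₁ × Fin d) ℂ :=
  tensorIdT N (maxEntangled d d d)

open Classical in
/-- Square root of a matrix (positive semidefinite case, junk value `0` otherwise). -/
def matSqrt {ι : Type} [Fintype ι] [DecidableEq ι] (A : Matrix ι ι ℂ) : Matrix ι ι ℂ :=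
  if h : A.PosSemidef then psdSqrt h else 0

/-- Fidelity `F(ρ,σ) = (tr √(√ρ σ √ρ))²`. -/
def fidelity {ι : Type} [Fintype ι] [DecidableEq ι] (ρ σ : Matrix ι ι ℂ) : ℝ :=
  ((matSqrt (matSqrt ρ * σ * matSqrt ρ)).trace.re) ^ 2

section OpTasks

variable {α₀ β₀ α₁ β₁ α₀' β₀' α₁' β₁' : Type}
variable [Fintype α₀] [DecidableEq α₀] [Fintype β₀] [DecidableEq β₀]
variable [Fintype α₁] [DecidableEq α₁] [Fintype β₁] [DecidableEq β₁]
variable [Fintype α₀'] [DecidableEq α₀'] [Fintype β₀'] [DecidableEq β₀']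
variable [Fintype α₁'] [DecidableEq α₁'] [Fintype β₁'] [DecidableEq β₁']

/-- One-shot dynamic entanglement cost under SEPPSC. -/
def oneShotCostSEPP (ε : ℝ) (N : MatMap (α₀ × β₀) (α₁ × β₁)) : ℝ :=
  sInf { t : ℝ | ∃ (K : ℕ) (Θ : Superchannel (Fin K) (Fin K) (Fin K) (Fin K) α₀ β₀ α₁ β₁),
    IsSEPPSC Θ ∧
    (1/2) * diamondNorm (fun X => Θ.apply (swapChannel K) X - N X) ≤ ε ∧
    t = Real.logb 2 ((K : ℝ) ^ 2) }

/-- One-shot distillable dynamic entanglement under SEPPSC. -/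
def oneShotDistillSEPP (ε : ℝ) (N : MatMap (α₀ × β₀) (α₁ × β₁)) : ℝ :=
  sSup { t : ℝ | ∃ (K : ℕ) (Θ : Superchannel α₀ β₀ α₁ β₁ (Fin K) (Fin K) (Fin K) (Fin K)),
    IsSEPPSC Θ ∧
    (1/2) * diamondNorm (fun X => Θ.apply N X - swapChannel K X) ≤ ε ∧
    t = Real.logb 2 ((K : ℝ) ^ 2) }

/-- Hypothesis-testing relative entropy of dynamic entanglement. -/
def EH (ε : ℝ) (N : MatMap (α₀ × β₀) (α₁ × β₁)) : ℝ :=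
  sSup { t : ℝ | ∃ (r : ℕ) (Ψ : Matrix ((α₀ × β₀) × Fin r) ((α₀ × β₀) × Fin r) ℂ)
      (Q : Matrix ((α₁ × β₁) × Fin r) ((α₁ × β₁) × Fin r) ℂ),
    IsPureState Ψ ∧ Q.PosSemidef ∧ ((1 : Matrix ((α₁ × β₁) × Fin r) ((α₁ × β₁) × Fin r) ℂ) - Q).PosSemidef ∧
    1 - ε ≤ ((tensorIdT N Ψ * Q).trace).re ∧
    t = sInf { u : ℝ | ∃ M : MatMap (α₀ × β₀) (α₁ × β₁), IsSepChannel M ∧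
        u = - Real.logb 2 (((tensorIdT M Ψ * Q).trace).re) } }

end OpTasks

/-- Reindexing a matrix map along equivalences of index types. -/
def reindexMap {ι₀ ι₁ κ₀ κ₁ : Type} (e₀ : ι₀ ≃ κ₀) (e₁ : ι₁ ≃ κ₁) (L : MatMap ι₀ ι₁) :
    MatMap κ₀ κ₁ :=
  fun X => Matrix.reindex e₁ e₁ (L (Matrix.reindex e₀.symm e₀.symm X))

section Cat

variable {α₀ β₀ α₁ β₁ : Type}
variable [Fintype α₀] [DecidableEq α₀] [Fintype β₀] [DecidableEq β₀]
variable [Fintype α₁] [DecidableEq α₁] [Fintype β₁] [DecidableEq β₁]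

/-- `N ⊗ F^L` as a bipartite channel for the cut `A C : B D` (catalyst `CD` of dimension `L×L`). -/
def tensorSwapCut (N : MatMap (α₀ × β₀) (α₁ × β₁)) (L : ℕ) :
    MatMap ((α₀ × Fin L) × (β₀ × Fin L)) ((α₁ × Fin L) × (β₁ × Fin L)) :=
  reindexMap (Equiv.prodProdProdComm α₀ β₀ (Fin L) (Fin L))
             (Equiv.prodProdProdComm α₁ β₁ (Fin L) (Fin L))
             (tensorMap N (swapChannel L))

/-- One-shot catalytic dynamic entanglement cost under δ-SEPPSC. -/
def catalyticCost (δ ε : ℝ) (N : MatMap (α₀ × β₀) (α₁ × β₁)) : ℝ :=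
  sInf { t : ℝ | ∃ (K L : ℕ)
      (Θ : Superchannel (Fin K × Fin L) (Fin K × Fin L) (Fin K × Fin L) (Fin K × Fin L)
            (α₀ × Fin L) (β₀ × Fin L) (α₁ × Fin L) (β₁ × Fin L)),
    IsDeltaSEPPSC δ Θ ∧
    ∃ N' : MatMap (α₀ × β₀) (α₁ × β₁), IsChannel N' ∧
      (1/2) * diamondNorm (fun X => N' X - N X) ≤ ε ∧
      Θ.apply (tensorSwapCut (swapChannel K) L) = tensorSwapCut N' L ∧
      t = Real.logb 2 ((K : ℝ) ^ 2) }

end Cat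

/-- Discrete Weyl operators on `ℂ^K`. -/
def weyl (K : ℕ) (k l : Fin K) : Matrix (Fin K) (Fin K) ℂ :=
  Matrix.of fun a s =>
    if (a : ℕ) = ((k : ℕ) + (s : ℕ)) % K
    then Complex.exp (2 * (Real.pi : ℂ) * Complex.I * ((s : ℕ) : ℂ) * ((l : ℕ) : ℂ) / (K : ℂ))
    else 0

/-- `n`-fold tensor power of a matrix. -/
def matPow {ι : Type} [Fintype ι] (X : Matrix ι ι ℂ) (n : ℕ) :
    Matrix (Fin n → ι) (Fin n → ι) ℂ :=
  Matrix.of fun f g => ∏ t, X (f t) (g t)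

/-- `n`-fold tensor power of a matrix map. -/
def powMap {ι₀ ι₁ : Type} [Fintype ι₀] [DecidableEq ι₀] (L : MatMap ι₀ ι₁) (n : ℕ) :
    MatMap (Fin n → ι₀) (Fin n → ι₁) :=
  fun X => Matrix.of fun f' g' => ∑ f : Fin n → ι₀, ∑ g : Fin n → ι₀,
    X f g * ∏ t, L (Matrix.single (f t) (g t) 1) (f' t) (g' t)

section Pow

variable {α₀ β₀ α₁ β₁ : Type}
variable [Fintype α₀] [DecidableEq α₀] [Fintype β₀] [DecidableEq β₀]
variable [Fintype α₁] [DecidableEq α₁] [Fintype β₁] [DecidableEq β₁]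

/-- `n`-fold tensor power of a bipartite channel, with cut `A^n : B^n`. -/
def powBi (N : MatMap (α₀ × β₀) (α₁ × β₁)) (n : ℕ) :
    MatMap ((Fin n → α₀) × (Fin n → β₀)) ((Fin n → α₁) × (Fin n → β₁)) :=
  reindexMap (Equiv.arrowProdEquivProdArrow (Fin n) (fun _ => α₀) (fun _ => β₀))
             (Equiv.arrowProdEquivProdArrow (Fin n) (fun _ => α₁) (fun _ => β₁))
             (powMap N n)

/-- `φ^{⊗n}` of a bipartite input-reference state, regrouped as
`((A₀ⁿ × B₀ⁿ) × refⁿ)`. -/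
def phiPow (n : ℕ)
    (φ : Matrix ((α₀ × β₀) × (α₀ × β₀)) ((α₀ × β₀) × (α₀ × β₀)) ℂ) :
    Matrix (((Fin n → α₀) × (Fin n → β₀)) × (Fin n → (α₀ × β₀)))
           (((Fin n → α₀) × (Fin n → β₀)) × (Fin n → (α₀ × β₀))) ℂ :=
  Matrix.reindex
    ((Equiv.arrowProdEquivProdArrow (Fin n) (fun _ => α₀ × β₀) (fun _ => α₀ × β₀)).trans
      (Equiv.prodCongr (Equiv.arrowProdEquivProdArrow (Fin n) (fun _ => α₀) (fun _ => β₀)) (Equiv.refl _)))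
    ((Equiv.arrowProdEquivProdArrow (Fin n) (fun _ => α₀ × β₀) (fun _ => α₀ × β₀)).trans
      (Equiv.prodCongr (Equiv.arrowProdEquivProdArrow (Fin n) (fun _ => α₀) (fun _ => β₀)) (Equiv.refl _)))
    (matPow φ n)

end Pow

open Classical in
/-- Base-2 matrix logarithm via the spectral decomposition (junk value `0` if not Hermitian). -/
def matLogb2 {ι : Type} [Fintype ι] [DecidableEq ι] (A : Matrix ι ι ℂ) : Matrix ι ι ℂ :=
  if h : A.IsHermitian then
    (h.eigenvectorUnitary : Matrix ι ι ℂ) *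
      Matrix.diagonal (fun i => ((Real.logb 2 (h.eigenvalues i) : ℝ) : ℂ)) *
      (star h.eigenvectorUnitary : Matrix ι ι ℂ)
  else 0

/-- Umegaki relative entropy `D(ρ‖σ) = tr ρ (log₂ ρ − log₂ σ)`. -/
def relEnt {ι : Type} [Fintype ι] [DecidableEq ι] (ρ σ : Matrix ι ι ℂ) : ℝ :=
  ((ρ * (matLogb2 ρ - matLogb2 σ)).trace).re

section Liberal

variable {α₀ β₀ α₁ β₁ : Type}
variable [Fintype α₀] [DecidableEq α₀] [Fintype β₀] [DecidableEq β₀]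
variable [Fintype α₁] [DecidableEq α₁] [Fintype β₁] [DecidableEq β₁]

/-- Zero-error one-shot dynamic entanglement cost under SEPPSC. -/
def zeroCostSEPP (N : MatMap (α₀ × β₀) (α₁ × β₁)) : ℝ :=
  sInf { t : ℝ | ∃ (K : ℕ) (Θ : Superchannel (Fin K) (Fin K) (Fin K) (Fin K) α₀ β₀ α₁ β₁),
    IsSEPPSC Θ ∧ Θ.apply (swapChannel K) = N ∧ t = Real.logb 2 ((K : ℝ) ^ 2) }

/-- Liberal (asymptotic) dynamic entanglement cost under SEPPSC. -/
def liberalCost (N : MatMap (α₀ × β₀) (α₁ × β₁)) : ℝ :=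
  limUnder (nhdsWithin (0 : ℝ) (Set.Ioi 0)) (fun ε : ℝ =>
    liminf (fun n : ℕ =>
      (1 / (n : ℝ)) * sSup { t : ℝ |
        ∃ φ : Matrix ((α₀ × β₀) × (α₀ × β₀)) ((α₀ × β₀) × (α₀ × β₀)) ℂ, IsState φ ∧
          t = sInf { u : ℝ |
            ∃ N'' : MatMap ((Fin n → α₀) × (Fin n → β₀)) ((Fin n → α₁) × (Fin n → β₁)),
              IsChannel N'' ∧
              (1/2) * traceNorm
                (tensorIdT N'' (phiPow n φ) - tensorIdT (powBi N n) (phiPow n φ)) ≤ ε ∧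
              u = zeroCostSEPP N'' } }) atTop)

/-- Liberal regularized relative entropy with respect to separable channels. -/
def liberalRelEnt (N : MatMap (α₀ × β₀) (α₁ × β₁)) : ℝ :=
  limUnder atTop (fun n : ℕ =>
    (1 / (n : ℝ)) * sSup { t : ℝ |
      ∃ φ : Matrix ((α₀ × β₀) × (α₀ × β₀)) ((α₀ × β₀) × (α₀ × β₀)) ℂ, IsState φ ∧
        t = sInf { u : ℝ | ∃ M : MatMap (α₀ × β₀) (α₁ × β₁), IsSepChannel M ∧
          u = relEnt (tensorIdT (powBi N n) (phiPow n φ))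
                     (tensorIdT (powBi M n) (phiPow n φ)) } })

end Liberal


/-! ### Auxiliary lemmas for robustness monotonicity -/

section AuxLin

variable {ι₀ ι₁ : Type}

lemma IsLinearFun.zero {L : MatMap ι₀ ι₁} (h : IsLinearFun L) : L 0 = 0 := by
  have h2 := h 1 0 0
  simp only [one_smul, add_zero] at h2
  exact (left_eq_add.mp h2)

lemma IsLinearFun.add {L : MatMap ι₀ ι₁} (h : IsLinearFun L) (X Y : Matrix ι₀ ι₀ ℂ) :
    L (X + Y) = L X + L Y := by
  simpa using h 1 X Y

lemma IsLinearFun.smul {L : MatMap ι₀ ι₁} (h : IsLinearFun L) (c : ℂ) (X : Matrix ι₀ ι₀ ℂ) :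
    L (c • X) = c • L X := by
  have h2 := h c X 0
  simpa [h.zero] using h2

lemma IsLinearFun.sum {L : MatMap ι₀ ι₁} (h : IsLinearFun L) {κ : Type*} (s : Finset κ)
    (f : κ → Matrix ι₀ ι₀ ℂ) : L (∑ i ∈ s, f i) = ∑ i ∈ s, L (f i) := by
  classical
  induction s using Finset.induction with
  | empty => simpa using h.zero
  | insert _ _ hx ih =>
      rw [Finset.sum_insert hx, Finset.sum_insert hx, h.add, ih]

lemma IsLinearFun.real_smul {L : MatMap ι₀ ι₁} (h : IsLinearFun L) (r : ℝ) (X : Matrix ι₀ ι₀ ℂ) :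
    L (r • X) = r • L X := by
  have hc : ∀ {n : Type} (M : Matrix n n ℂ), r • M = (r : ℂ) • M := by
    intro n M; ext i j; simp [Matrix.smul_apply, Complex.real_smul]
  rw [hc X, h.smul, ← hc]

end AuxLin


section AuxPSD

variable {ι : Type} [Fintype ι]

lemma psd_real_smul {A : Matrix ι ι ℂ} (hA : A.PosSemidef) {r : ℝ} (hr : 0 ≤ r) :
    (r • A).PosSemidef := by
  refine Matrix.PosSemidef.of_dotProduct_mulVec_nonneg ?_ ?_
  · unfold Matrix.IsHermitian
    rw [Matrix.conjTranspose_smul, star_trivial, hA.1]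
  · intro x
    have h1 : (r • A) *ᵥ x = r • (A *ᵥ x) := Matrix.smul_mulVec r A x
    rw [h1]
    have h2 : star x ⬝ᵥ (r • (A *ᵥ x)) = (r : ℂ) * (star x ⬝ᵥ (A *ᵥ x)) := by
      simp only [dotProduct, Pi.smul_apply, Complex.real_smul, Finset.mul_sum]
      apply Finset.sum_congr rfl; intro i _; ring
    rw [h2]
    exact mul_nonneg (by exact_mod_cast hr) (hA.dotProduct_mulVec_nonneg x)

lemma psd_vecMulVec (a : ι → ℂ) : (Matrix.vecMulVec a (star a)).PosSemidef := by
  refine Matrix.PosSemidef.of_dotProduct_mulVec_nonneg ?_ ?_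
  · unfold Matrix.IsHermitian
    ext i j
    simp [Matrix.conjTranspose_apply, Matrix.vecMulVec_apply, mul_comm]
  · intro x
    have key : star x ⬝ᵥ (Matrix.vecMulVec a (star a) *ᵥ x)
        = star (star a ⬝ᵥ x) * (star a ⬝ᵥ x) := by
      simp only [dotProduct, Matrix.mulVec, Matrix.vecMulVec_apply, Pi.star_apply,
        dotProduct]
      simp only [Finset.mul_sum, Finset.sum_mul, star_sum, star_mul', star_star]
      rw [Finset.sum_comm]
      apply Finset.sum_congr rfl; intro i _
      apply Finset.sum_congr rfl; intro j _
      ring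
    rw [key]
    exact star_mul_self_nonneg _

lemma psd_smul_one_sub_vecMulVec [DecidableEq ι] (a : ι → ℂ) {t : ℝ}
    (ht : ∑ g, Complex.normSq (a g) ≤ t) :
    ((t • (1 : Matrix ι ι ℂ)) - Matrix.vecMulVec a (star a)).PosSemidef := by
  have ht0 : 0 ≤ t := le_trans (Finset.sum_nonneg fun g _ => Complex.normSq_nonneg _) ht
  refine Matrix.PosSemidef.of_dotProduct_mulVec_nonneg ?_ ?_
  · unfold Matrix.IsHermitian
    rw [Matrix.conjTranspose_sub, Matrix.conjTranspose_smul, star_trivial,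
      Matrix.conjTranspose_one, (psd_vecMulVec a).1]
  · intro x
    have hsub : ((t • (1 : Matrix ι ι ℂ)) - Matrix.vecMulVec a (star a)) *ᵥ x
        = t • x - (Matrix.vecMulVec a (star a)) *ᵥ x := by
      rw [Matrix.sub_mulVec, Matrix.smul_mulVec, Matrix.one_mulVec]
    rw [hsub, dotProduct_sub]
    set ip : ℂ := star a ⬝ᵥ x with hip
    have h1 : star x ⬝ᵥ (t • x) = ((t * ∑ g, Complex.normSq (x g) : ℝ) : ℂ) := by
      simp only [dotProduct, Pi.smul_apply, Pi.star_apply, Complex.real_smul]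
      push_cast
      rw [Finset.mul_sum]
      apply Finset.sum_congr rfl; intro g _
      rw [Complex.normSq_eq_conj_mul_self]
      push_cast
      rw [RCLike.star_def]; ring
    have h2 : star x ⬝ᵥ (Matrix.vecMulVec a (star a) *ᵥ x)
        = ((Complex.normSq ip : ℝ) : ℂ) := by
      have key : star x ⬝ᵥ (Matrix.vecMulVec a (star a) *ᵥ x) = star ip * ip := by
        simp only [dotProduct, Matrix.mulVec, Matrix.vecMulVec_apply, Pi.star_apply,
          hip, dotProduct]
        simp only [Finset.mul_sum, Finset.sum_mul, star_sum, star_mul', star_star]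
        rw [Finset.sum_comm]
        apply Finset.sum_congr rfl; intro i _
        apply Finset.sum_congr rfl; intro j _
        ring
      rw [key]
      rw [show star ip = (starRingEnd ℂ) ip from rfl, ← Complex.normSq_eq_conj_mul_self]
    rw [h1, h2, ← Complex.ofReal_sub]
    rw [← Complex.ofReal_zero, Complex.real_le_real, sub_nonneg]
    -- Cauchy–Schwarz
    have hcs : ‖ip‖ ≤ ∑ g, ‖a g‖ * ‖x g‖ := by
      calc ‖ip‖ ≤ ∑ g, ‖star (a g) * x g‖ := by
            rw [hip]; exact (norm_sum_le _ _)
        _ = ∑ g, ‖a g‖ * ‖x g‖ := by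
            apply Finset.sum_congr rfl; intro g _
            rw [norm_mul]; simp
    have hcs2 : (∑ g, ‖a g‖ * ‖x g‖) ^ 2
        ≤ (∑ g, ‖a g‖ ^ 2) * ∑ g, ‖x g‖ ^ 2 :=
      Finset.sum_mul_sq_le_sq_mul_sq _ _ _
    have habs : Complex.normSq ip ≤ (∑ g, ‖a g‖ ^ 2) * ∑ g, ‖x g‖ ^ 2 := by
      rw [Complex.normSq_eq_norm_sq]
      refine le_trans ?_ hcs2
      exact pow_le_pow_left₀ (norm_nonneg _) hcs 2
    have ha2 : (∑ g, ‖a g‖ ^ 2) ≤ t := by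
      simpa [Complex.sq_norm] using ht
    have hx2 : (∑ g, ‖x g‖ ^ 2) = ∑ g, Complex.normSq (x g) := by
      simp [Complex.sq_norm]
    calc Complex.normSq ip ≤ (∑ g, ‖a g‖ ^ 2) * ∑ g, ‖x g‖ ^ 2 := habs
      _ ≤ t * ∑ g, ‖x g‖ ^ 2 := by
          apply mul_le_mul_of_nonneg_right ha2
          exact Finset.sum_nonneg fun g _ => sq_nonneg _
      _ = t * ∑ g, Complex.normSq (x g) := by rw [hx2]

lemma psd_sum {κ : Type*} (s : Finset κ) (f : κ → Matrix ι ι ℂ)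
    (h : ∀ i ∈ s, (f i).PosSemidef) : (∑ i ∈ s, f i).PosSemidef :=
  Finset.sum_induction f _ (fun _ _ ha hb => ha.add hb) Matrix.PosSemidef.zero h

end AuxPSD


section AofChoi

variable {ι₀ ι₁ : Type} [Fintype ι₀] [DecidableEq ι₀] [Fintype ι₁] [DecidableEq ι₁]

/-- The linear map with (unnormalized) Choi matrix `C`. -/
def AofChoi (C : Matrix (ι₁ × ι₀) (ι₁ × ι₀) ℂ) : MatMap ι₀ ι₁ :=
  fun X => Matrix.of fun p q => ∑ i, ∑ j, X i j * C (p, i) (q, j)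

lemma AofChoi_linear (C : Matrix (ι₁ × ι₀) (ι₁ × ι₀) ℂ) : IsLinearFun (AofChoi C) := by
  intro c X Y
  ext p q
  simp only [AofChoi, Matrix.of_apply, Matrix.add_apply, Matrix.smul_apply, smul_eq_mul,
    add_mul, mul_assoc, Finset.sum_add_distrib, Finset.mul_sum]

lemma AofChoi_apply_std (C : Matrix (ι₁ × ι₀) (ι₁ × ι₀) ℂ) (a b : ι₀) (p q : ι₁) :
    AofChoi C (Matrix.single a b 1) p q = C (p, a) (q, b) := by
  simp only [AofChoi, Matrix.of_apply, Matrix.single, ite_mul, one_mul, zero_mul]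
  rw [Finset.sum_comm]
  rw [Finset.sum_eq_single b]
  · rw [Finset.sum_eq_single a]
    · simp
    · intro i _ hi; simp [Ne.symm hi]
    · intro h; exact absurd (Finset.mem_univ a) h
  · intro j _ hj; apply Finset.sum_eq_zero; intro i _; simp [Ne.symm hj]
  · intro h; exact absurd (Finset.mem_univ b) h

lemma AofChoi_cp {C : Matrix (ι₁ × ι₀) (ι₁ × ι₀) ℂ} (hC : C.PosSemidef) :
    IsCompletelyPositive (AofChoi C) := by
  intro r X hX
  obtain ⟨B, hB⟩ : ∃ B : Matrix (ι₁ × ι₀) (ι₁ × ι₀) ℂ, C = Bᴴ * B := by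
    open scoped MatrixOrder in
    exact ⟨CFC.sqrt C, by rw [(CFC.sqrt_nonneg C).posSemidef.1.eq, CFC.sqrt_mul_sqrt_self C hC.nonneg]⟩
  have hCent : ∀ (p q : ι₁) (i j : ι₀),
      C (p, i) (q, j) = ∑ α : ι₁ × ι₀, star (B α (p, i)) * B α (q, j) := by
    intro p q i j
    rw [hB, Matrix.mul_apply]
    apply Finset.sum_congr rfl; intro α _
    rw [Matrix.conjTranspose_apply]
  set K : (ι₁ × ι₀) → Matrix (ι₁ × Fin r) (ι₀ × Fin r) ℂ :=
    fun α => Matrix.of fun pm im => if pm.2 = im.2 then star (B α (pm.1, im.1)) else 0 with hK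
  have key : tensorIdT (AofChoi C) X = ∑ α : ι₁ × ι₀, K α * X * (K α)ᴴ := by
    ext pm qn
    obtain ⟨p, m⟩ := pm
    obtain ⟨q, n⟩ := qn
    have lhs : tensorIdT (AofChoi C) X (p, m) (q, n)
        = ∑ i, ∑ j, X (i, m) (j, n) * C (p, i) (q, j) := rfl
    have h1 : ∀ (α : ι₁ × ι₀) (b : ι₀ × Fin r),
        (K α * X) (p, m) b = ∑ i, star (B α (p, i)) * X (i, m) b := by
      intro α b
      rw [Matrix.mul_apply, Fintype.sum_prod_type, Finset.sum_comm]
      rw [Finset.sum_eq_single m]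
      · apply Finset.sum_congr rfl; intro i _; simp [hK]
      · intro m' _ hm'
        apply Finset.sum_eq_zero; intro i _
        simp [hK, Ne.symm hm']
      · intro h; exact absurd (Finset.mem_univ m) h
    have h2 : ∀ (α : ι₁ × ι₀), (K α * X * (K α)ᴴ) (p, m) (q, n)
        = ∑ j, (K α * X) (p, m) (j, n) * B α (q, j) := by
      intro α
      rw [Matrix.mul_apply, Fintype.sum_prod_type, Finset.sum_comm]
      rw [Finset.sum_eq_single n]
      · apply Finset.sum_congr rfl; intro j _
        simp [hK, Matrix.conjTranspose_apply]
      · intro n' _ hn'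
        apply Finset.sum_eq_zero; intro j _
        simp [hK, Matrix.conjTranspose_apply, Ne.symm hn']
      · intro h; exact absurd (Finset.mem_univ n) h
    rw [lhs, Matrix.sum_apply]
    calc ∑ i, ∑ j, X (i, m) (j, n) * C (p, i) (q, j)
        = ∑ i, ∑ j, ∑ α : ι₁ × ι₀, star (B α (p, i)) * X (i, m) (j, n) * B α (q, j) := by
          apply Finset.sum_congr rfl; intro i _
          apply Finset.sum_congr rfl; intro j _
          rw [hCent p q i j, Finset.mul_sum]
          apply Finset.sum_congr rfl; intro α _; ring
      _ = ∑ α : ι₁ × ι₀, ∑ i, ∑ j, star (B α (p, i)) * X (i, m) (j, n) * B α (q, j) := by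
          rw [show (∑ i, ∑ j, ∑ α : ι₁ × ι₀, star (B α (p, i)) * X (i, m) (j, n) * B α (q, j))
              = ∑ i, ∑ α : ι₁ × ι₀, ∑ j, star (B α (p, i)) * X (i, m) (j, n) * B α (q, j) from
            Finset.sum_congr rfl fun i _ => Finset.sum_comm]
          exact Finset.sum_comm
      _ = ∑ α : ι₁ × ι₀, (K α * X * (K α)ᴴ) (p, m) (q, n) := by
          apply Finset.sum_congr rfl; intro α _
          rw [h2 α]
          rw [Finset.sum_comm]
          apply Finset.sum_congr rfl; intro j _
          rw [h1 α (j, n), Finset.sum_mul]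
  rw [key]
  exact psd_sum _ _ fun α _ => hX.mul_mul_conjTranspose_same (K α)

end AofChoi


section AuxDecomp

open Complex

/-- Coefficients for the decomposition of matrix units into rank-one PSD matrices. -/
def zcf : Fin 4 → ℂ := ![-(1+Complex.I)/2, -(1+Complex.I)/2, 1/2, Complex.I/2]
def wAf : Fin 4 → ℂ := ![1, 0, 1, 1]
def wBf : Fin 4 → ℂ := ![0, 1, 1, Complex.I]

/-- The four vectors whose rank-one projections decompose the matrix unit `E_{ab}`. -/
def wvec {ι : Type} [DecidableEq ι] (c : Fin 4) (a b : ι) : ι → ℂ :=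
  fun g => (if g = a then wAf c else 0) + (if g = b then wBf c else 0)

lemma wvec_normSq_le {ι : Type} [Fintype ι] [DecidableEq ι] (c : Fin 4) (a b : ι) :
    ∑ g, Complex.normSq (wvec c a b g) ≤ 4 := by
  have hterm : ∀ g, Complex.normSq (wvec c a b g)
      ≤ 2 * ((if g = a then Complex.normSq (wAf c) else 0)
           + (if g = b then Complex.normSq (wBf c) else 0)) := by
    intro g
    have habs : ‖wvec c a b g‖
        ≤ ‖if g = a then wAf c else 0‖ + ‖if g = b then wBf c else 0‖ :=
      norm_add_le _ _
    have h1 : Complex.normSq (wvec c a b g) = (‖wvec c a b g‖)^2 :=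
      (Complex.sq_norm _).symm
    rw [h1]
    have h2 : (‖wvec c a b g‖)^2
        ≤ (‖if g = a then wAf c else 0‖ + ‖if g = b then wBf c else 0‖)^2 :=
      pow_le_pow_left₀ (norm_nonneg _) habs 2
    refine le_trans h2 ?_
    have h3 : ∀ (u v : ℝ), (u + v)^2 ≤ 2*(u^2 + v^2) := by intro u v; nlinarith [sq_nonneg (u - v)]
    refine le_trans (h3 _ _) ?_
    apply mul_le_mul_of_nonneg_left _ (by norm_num : (0:ℝ) ≤ 2)
    apply add_le_add
    · split_ifs <;> simp [Complex.sq_norm]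
    · split_ifs <;> simp [Complex.sq_norm]
  refine le_trans (Finset.sum_le_sum fun g _ => hterm g) ?_
  rw [← Finset.mul_sum, Finset.sum_add_distrib, Finset.sum_ite_eq' Finset.univ a,
    Finset.sum_ite_eq' Finset.univ b]
  simp only [Finset.mem_univ, if_true]
  have hA : Complex.normSq (wAf c) ≤ 1 := by fin_cases c <;> simp [wAf]
  have hB : Complex.normSq (wBf c) ≤ 1 := by fin_cases c <;> simp [wBf]
  nlinarith

lemma stdBasis_decomp {ι : Type} [Fintype ι] [DecidableEq ι] (a b : ι) :
    Matrix.single a b (1:ℂ)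
      = ∑ c : Fin 4, zcf c • Matrix.vecMulVec (wvec c a b) (star (wvec c a b)) := by
  ext g h
  have hx1 : ∀ g : ι, wvec (0 : Fin 4) a b g = (if g = a then (1:ℂ) else 0) := by
    intro g; simp [wvec, wAf, wBf]
  have hx2 : ∀ g : ι, wvec (1 : Fin 4) a b g = (if g = b then (1:ℂ) else 0) := by
    intro g; simp [wvec, wAf, wBf]
  have hx3 : ∀ g : ι, wvec (2 : Fin 4) a b g
      = (if g = a then (1:ℂ) else 0) + (if g = b then (1:ℂ) else 0) := by
    intro g; simp [wvec, wAf, wBf]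
  have hx4 : ∀ g : ι, wvec (3 : Fin 4) a b g
      = (if g = a then (1:ℂ) else 0) + Complex.I * (if g = b then (1:ℂ) else 0) := by
    intro g; simp only [wvec, wAf, wBf]; split_ifs <;> simp
  have hy1 : star (wvec (0 : Fin 4) a b h) = (if h = a then (1:ℂ) else 0) := by
    rw [hx1 h]; split_ifs <;> simp
  have hy2 : star (wvec (1 : Fin 4) a b h) = (if h = b then (1:ℂ) else 0) := by
    rw [hx2 h]; split_ifs <;> simp
  have hy3 : star (wvec (2 : Fin 4) a b h)
      = (if h = a then (1:ℂ) else 0) + (if h = b then (1:ℂ) else 0) := by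
    rw [hx3 h]; split_ifs <;> simp
  have hy4 : star (wvec (3 : Fin 4) a b h)
      = (if h = a then (1:ℂ) else 0) - Complex.I * (if h = b then (1:ℂ) else 0) := by
    rw [hx4 h]; split_ifs <;> simp [Complex.conj_I] <;> ring
  have hlhs : Matrix.single a b (1:ℂ) g h
      = (if g = a then (1:ℂ) else 0) * (if h = b then (1:ℂ) else 0) := by
    simp only [Matrix.single, Matrix.of_apply]
    by_cases h1 : g = a <;> by_cases h2 : h = b <;>
      simp [h1, h2] <;> first | (intro hh; exact absurd hh.symm (by assumption)) | (intro hh _; exact absurd hh.symm (by assumption)) | skip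
  rw [hlhs]
  simp only [Matrix.sum_apply, Matrix.smul_apply, Matrix.vecMulVec_apply, smul_eq_mul]
  rw [Fin.sum_univ_four]
  simp only [show ∀ (c : Fin 4) (gg : ι), star (wvec c a b) gg = star (wvec c a b gg) from
    fun _ _ => rfl]
  rw [hx1 g, hx2 g, hx3 g, hx4 g, hy1, hy2, hy3, hy4]
  simp only [zcf, Matrix.cons_val_zero, Matrix.cons_val_one, Matrix.head_cons,
    Matrix.cons_val_two, Matrix.tail_cons, Matrix.cons_val_three]
  set x1 := (if g = a then (1:ℂ) else 0) with hx1'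
  set x2 := (if g = b then (1:ℂ) else 0) with hx2'
  set y1 := (if h = a then (1:ℂ) else 0) with hy1'
  set y2 := (if h = b then (1:ℂ) else 0) with hy2'
  linear_combination (x1*y2/2 - x2*y1/2 + Complex.I*x2*y2/2) * Complex.I_mul_I

end AuxDecomp


section AuxCP

variable {ι₀ ι₁ : Type} [Fintype ι₀] [Fintype ι₁]

/-- A completely positive map preserves positive semidefiniteness. -/
lemma IsCompletelyPositive.psd_map {L : MatMap ι₀ ι₁} (hL : IsCompletelyPositive L)
    {X : Matrix ι₀ ι₀ ℂ} (hX : X.PosSemidef) : (L X).PosSemidef := by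
  set X1 : Matrix (ι₀ × Fin 1) (ι₀ × Fin 1) ℂ := Matrix.of fun p q => X p.1 q.1 with hX1
  have hX1psd : X1.PosSemidef := by
    refine Matrix.PosSemidef.of_dotProduct_mulVec_nonneg ?_ ?_
    · unfold Matrix.IsHermitian; ext p q
      simp only [hX1, Matrix.conjTranspose_apply, Matrix.of_apply]
      have h := congrFun (congrFun hX.1 p.1) q.1
      rw [Matrix.conjTranspose_apply] at h
      exact h
    · intro z
      have : star z ⬝ᵥ (X1 *ᵥ z) = star (fun i => z (i, 0)) ⬝ᵥ (X *ᵥ fun i => z (i, 0)) := by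
        simp only [dotProduct, Matrix.mulVec, Fintype.sum_prod_type, hX1,
          Matrix.of_apply, Finset.univ_unique, Finset.sum_singleton, Pi.star_apply,
          dotProduct]
        apply Finset.sum_congr rfl; intro i _
        simp [Fin.default_eq_zero]
      rw [this]; exact hX.dotProduct_mulVec_nonneg _
  have hbig := hL 1 X1 hX1psd
  have hent : ∀ p q, L X p q = tensorIdT L X1 (p, 0) (q, 0) := by
    intro p q
    show L X p q = L (Matrix.of fun i j => X1 (i, 0) (j, 0)) p q
    congr 1
  refine Matrix.PosSemidef.of_dotProduct_mulVec_nonneg ?_ ?_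
  · unfold Matrix.IsHermitian; ext p q
    rw [Matrix.conjTranspose_apply, hent p q, hent q p]
    have h := congrFun (congrFun hbig.1 (p, 0)) (q, 0)
    rw [Matrix.conjTranspose_apply] at h
    exact h
  · intro z
    have : star z ⬝ᵥ (L X *ᵥ z)
        = star (fun (p : ι₁ × Fin 1) => z p.1) ⬝ᵥ (tensorIdT L X1 *ᵥ fun p => z p.1) := by
      simp only [dotProduct, Matrix.mulVec, Fintype.sum_prod_type, Finset.univ_unique,
        Finset.sum_singleton, Pi.star_apply, dotProduct]
      apply Finset.sum_congr rfl; intro p _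
      rw [Finset.mul_sum, Finset.mul_sum]
      apply Finset.sum_congr rfl; intro q _
      rw [hent p q]
      simp [Fin.default_eq_zero]
    rw [this]; exact hbig.dotProduct_mulVec_nonneg _

end AuxCP

section AuxChannel

variable {ι₀ ι₁ ι₂ : Type} [Fintype ι₀] [Fintype ι₁] [Fintype ι₂]

lemma tensorIdT_comp (L1 : MatMap ι₀ ι₁) (L2 : MatMap ι₁ ι₂) {ρ : Type}
    (X : Matrix (ι₀ × ρ) (ι₀ × ρ) ℂ) :
    tensorIdT (fun Y => L2 (L1 Y)) X = tensorIdT L2 (tensorIdT L1 X) := rfl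

lemma IsChannel.comp {L1 : MatMap ι₀ ι₁} {L2 : MatMap ι₁ ι₂}
    (h1 : IsChannel L1) (h2 : IsChannel L2) : IsChannel (fun X => L2 (L1 X)) := by
  refine ⟨?_, ?_, ?_⟩
  · intro c X Y
    show L2 (L1 (c • X + Y)) = c • L2 (L1 X) + L2 (L1 Y)
    rw [h1.1, h2.1]
  · intro r X hX
    rw [tensorIdT_comp]
    exact h2.2.1 r _ (h1.2.1 r X hX)
  · intro X; rw [h2.2.2, h1.2.2]

lemma tensorIdT_channel {E : MatMap ι₀ ι₁} (hE : IsChannel E) (e : ℕ) :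
    IsChannel (tensorIdT E (ρ := Fin e)) := by
  refine ⟨?_, ?_, ?_⟩
  · intro c X Y
    ext p q
    have hslice : (Matrix.of fun i j => (c • X + Y) (i, p.2) (j, q.2))
        = c • (Matrix.of fun i j => X (i, p.2) (j, q.2))
          + (Matrix.of fun i j => Y (i, p.2) (j, q.2)) := by
      ext i j; simp [Matrix.add_apply, Matrix.smul_apply]
    show E (Matrix.of fun i j => (c • X + Y) (i, p.2) (j, q.2)) p.1 q.1 = _
    rw [hslice, hE.1]
    simp [Matrix.add_apply, Matrix.smul_apply, tensorIdT]
  · intro r X hX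
    set eqv0 : (ι₀ × Fin e) × Fin r ≃ ι₀ × Fin (e * r) :=
      (Equiv.prodAssoc ι₀ (Fin e) (Fin r)).trans
        (Equiv.prodCongr (Equiv.refl ι₀) finProdFinEquiv) with heqv0
    set eqv1 : (ι₁ × Fin e) × Fin r ≃ ι₁ × Fin (e * r) :=
      (Equiv.prodAssoc ι₁ (Fin e) (Fin r)).trans
        (Equiv.prodCongr (Equiv.refl ι₁) finProdFinEquiv) with heqv1
    have key : tensorIdT (tensorIdT E (ρ := Fin e)) X
        = (tensorIdT E (X.submatrix eqv0.symm eqv0.symm)).submatrix eqv1 eqv1 := by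
      ext pm qn
      obtain ⟨⟨p, c⟩, m⟩ := pm
      obtain ⟨⟨q, d⟩, n⟩ := qn
      have lhsEq : tensorIdT (tensorIdT E (ρ := Fin e)) X ((p, c), m) ((q, d), n)
          = E (Matrix.of fun i j => X ((i, c), m) ((j, d), n)) p q := rfl
      have rhsEq : (tensorIdT E (X.submatrix eqv0.symm eqv0.symm)).submatrix eqv1 eqv1
            ((p, c), m) ((q, d), n)
          = E (Matrix.of fun i j => X.submatrix eqv0.symm eqv0.symm
                (i, finProdFinEquiv (c, m)) (j, finProdFinEquiv (d, n))) p q := rfl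
      rw [lhsEq, rhsEq]
      congr 1
      ext i j
      simp only [Matrix.of_apply, Matrix.submatrix_apply, heqv0,
        Equiv.symm_trans_apply, Equiv.prodCongr_symm, Equiv.refl_symm,
        Equiv.prodCongr_apply, Equiv.coe_refl, Prod.map_apply, id_eq,
        Equiv.symm_apply_apply, Equiv.prodAssoc_symm_apply]
    rw [key]
    exact ((hE.2.1 (e * r) _ (hX.submatrix _))).submatrix _
  · intro X
    simp only [Matrix.trace, Matrix.diag]
    rw [Fintype.sum_prod_type, Finset.sum_comm, Fintype.sum_prod_type]
    conv_rhs => rw [Finset.sum_comm]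
    apply Finset.sum_congr rfl; intro c _
    have h := hE.2.2 (Matrix.of fun i j => X (i, c) (j, c))
    simp only [Matrix.trace, Matrix.diag, Matrix.of_apply] at h
    exact h

lemma Superchannel.apply_channel {α₀ β₀ α₁ β₁ α₀' β₀' α₁' β₁' : Type}
    [Fintype α₀] [Fintype β₀] [Fintype α₁] [Fintype β₁]
    [Fintype α₀'] [Fintype β₀'] [Fintype α₁'] [Fintype β₁']
    (Θ : Superchannel α₀ β₀ α₁ β₁ α₀' β₀' α₁' β₁')
    {E : MatMap (α₀ × β₀) (α₁ × β₁)} (hE : IsChannel E) : IsChannel (Θ.apply E) := by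
  have h1 : IsChannel (fun X => tensorIdT E (Θ.pre X)) :=
    Θ.pre_channel.comp (tensorIdT_channel hE Θ.e)
  exact h1.comp Θ.post_channel

end AuxChannel


section AuxMix

variable {ι₀ ι₁ : Type} [Fintype ι₀] [Fintype ι₁]

lemma tensorIdT_mix (N M : MatMap ι₀ ι₁) (s : ℝ) {ρ : Type}
    (Y : Matrix (ι₀ × ρ) (ι₀ × ρ) ℂ) :
    tensorIdT (fun X => (1 + s)⁻¹ • (N X + s • M X)) Y
      = (1 + s)⁻¹ • (tensorIdT N Y + s • tensorIdT M Y) := by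
  ext p q
  simp [tensorIdT, Matrix.smul_apply, Matrix.add_apply]

lemma IsChannel.mix {N M : MatMap ι₀ ι₁} (hN : IsChannel N) (hM : IsChannel M)
    {s : ℝ} (hs : 0 ≤ s) :
    IsChannel (fun X => (1 + s)⁻¹ • (N X + s • M X)) := by
  have h1s : (0:ℝ) < 1 + s := by linarith
  refine ⟨?_, ?_, ?_⟩
  · intro c X Y
    show (1 + s)⁻¹ • (N (c • X + Y) + s • M (c • X + Y)) = _
    rw [hN.1, hM.1]
    ext p q
    simp only [Matrix.smul_apply, Matrix.add_apply, smul_eq_mul, Complex.real_smul]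
    ring
  · intro r X hX
    rw [tensorIdT_mix]
    have h1 := hN.2.1 r X hX
    have h2 := psd_real_smul (hM.2.1 r X hX) hs
    exact psd_real_smul (h1.add h2) (by positivity)
  · intro X
    show Matrix.trace ((1 + s)⁻¹ • (N X + s • M X)) = X.trace
    rw [Matrix.trace_smul, Matrix.trace_add, Matrix.trace_smul, hN.2.2, hM.2.2]
    rw [show X.trace + s • X.trace = ((1 + s : ℝ)) • X.trace by
      rw [add_smul, one_smul]]
    rw [smul_smul, inv_mul_cancel₀ (ne_of_gt h1s), one_smul]

end AuxMix

section AuxApplyMix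

variable {α₀ β₀ α₁ β₁ α₀' β₀' α₁' β₁' : Type}
variable [Fintype α₀] [Fintype β₀] [Fintype α₁] [Fintype β₁]
variable [Fintype α₀'] [Fintype β₀'] [Fintype α₁'] [Fintype β₁']

lemma Superchannel.apply_mix (Θ : Superchannel α₀ β₀ α₁ β₁ α₀' β₀' α₁' β₁')
    (N M : MatMap (α₀ × β₀) (α₁ × β₁)) (s : ℝ) :
    Θ.apply (fun X => (1 + s)⁻¹ • (N X + s • M X))
      = fun X => (1 + s)⁻¹ • (Θ.apply N X + s • Θ.apply M X) := by
  funext X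
  show Θ.post (tensorIdT (fun X => (1 + s)⁻¹ • (N X + s • M X)) (Θ.pre X)) = _
  rw [tensorIdT_mix]
  have hlin := Θ.post_channel.1
  have hsmul : ∀ (r : ℝ) (W : Matrix ((α₁ × β₁) × Fin Θ.e) ((α₁ × β₁) × Fin Θ.e) ℂ),
      Θ.post (r • W) = r • Θ.post W := fun r W => hlin.real_smul r W
  have hadd := hlin.add
  rw [hsmul, hadd, hsmul]
  rfl

end AuxApplyMix


section Witness

variable {α₀ β₀ α₁ β₁ : Type}
variable [Fintype α₀] [DecidableEq α₀] [Fintype β₀] [DecidableEq β₀]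
variable [Fintype α₁] [DecidableEq α₁] [Fintype β₁] [DecidableEq β₁]

/-- Entry of a matrix-unit decomposition sum. -/
lemma stdBasis_decomp_entry {ι : Type} [Fintype ι] [DecidableEq ι] (a b g h : ι) :
    ∑ c : Fin 4, zcf c * (wvec c a b g * (starRingEnd ℂ) (wvec c a b h))
      = Matrix.single a b (1:ℂ) g h := by
  have hd := congrFun (congrFun (stdBasis_decomp a b) g) h
  rw [hd, Matrix.sum_apply]
  apply Finset.sum_congr rfl; intro c _
  rw [Matrix.smul_apply, Matrix.vecMulVec_apply, smul_eq_mul]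
  rfl

/-- Choi entries of a bipartite map, organized along the `A : B` cut. -/
def jfun (N : MatMap (α₀ × β₀) (α₁ × β₁)) (x y : α₁ × α₀) (u v : β₁ × β₀) : ℂ :=
  N (Matrix.single (x.2, u.2) (y.2, v.2) 1) (x.1, u.1) (y.1, v.1)

lemma jfun_herm {N : MatMap (α₀ × β₀) (α₁ × β₁)} (hN : IsChannel N)
    (x y : α₁ × α₀) (u v : β₁ × β₀) :
    (starRingEnd ℂ) (jfun N x y u v) = jfun N y x v u := by
  set a : α₀ × β₀ := (x.2, u.2) with ha
  set b : α₀ × β₀ := (y.2, v.2) with hb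
  have hEab := stdBasis_decomp a b
  have hVherm : ∀ c : Fin 4,
      (Matrix.vecMulVec (wvec c a b) (star (wvec c a b)))ᴴ
        = Matrix.vecMulVec (wvec c a b) (star (wvec c a b)) :=
    fun c => (psd_vecMulVec (wvec c a b)).1
  have hEba : Matrix.single b a (1:ℂ)
      = ∑ c : Fin 4, (starRingEnd ℂ) (zcf c) •
          Matrix.vecMulVec (wvec c a b) (star (wvec c a b)) := by
    have h := congrArg Matrix.conjTranspose hEab
    have hstd : (Matrix.single a b (1:ℂ))ᴴ = Matrix.single b a (1:ℂ) := by
      ext g h'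
      simp only [Matrix.conjTranspose_apply, Matrix.single, Matrix.of_apply]
      split_ifs with h1 h2 h2 <;> simp_all <;> tauto
    rw [hstd] at h
    rw [h, Matrix.conjTranspose_sum]
    apply Finset.sum_congr rfl; intro c _
    rw [Matrix.conjTranspose_smul, hVherm c]
    rfl
  have hNV : ∀ c : Fin 4, ∀ P Q : α₁ × β₁,
      (starRingEnd ℂ) (N (Matrix.vecMulVec (wvec c a b) (star (wvec c a b))) Q P)
        = N (Matrix.vecMulVec (wvec c a b) (star (wvec c a b))) P Q := by
    intro c P Q
    have hps := (hN.2.1).psd_map (psd_vecMulVec (wvec c a b))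
    have h := congrFun (congrFun hps.1 P) Q
    rw [Matrix.conjTranspose_apply] at h
    exact h
  have h1 : ∀ P Q : α₁ × β₁, N (Matrix.single a b 1) P Q
      = ∑ c : Fin 4, zcf c * N (Matrix.vecMulVec (wvec c a b) (star (wvec c a b))) P Q := by
    intro P Q
    rw [hEab, hN.1.sum, Matrix.sum_apply]
    apply Finset.sum_congr rfl; intro c _
    rw [hN.1.smul, Matrix.smul_apply, smul_eq_mul]
  have h2 : ∀ P Q : α₁ × β₁, N (Matrix.single b a 1) P Q
      = ∑ c : Fin 4, (starRingEnd ℂ) (zcf c)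
          * N (Matrix.vecMulVec (wvec c a b) (star (wvec c a b))) P Q := by
    intro P Q
    rw [hEba, hN.1.sum, Matrix.sum_apply]
    apply Finset.sum_congr rfl; intro c _
    rw [hN.1.smul, Matrix.smul_apply, smul_eq_mul]
  show (starRingEnd ℂ) (N (Matrix.single a b 1) (x.1, u.1) (y.1, v.1))
      = N (Matrix.single b a 1) (y.1, v.1) (x.1, u.1)
  rw [h1, h2, map_sum]
  apply Finset.sum_congr rfl; intro c _
  rw [RingHom.map_mul, hNV c]

/-- The index type for the separable decomposition. -/
abbrev WIdx (α₀ α₁ β₀ β₁ : Type) : Type :=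
  ((α₁ × α₀) × (α₁ × α₀)) × ((β₁ × β₀) × (β₁ × β₀)) × (Fin 4 × Fin 4)

def avec (t : WIdx α₀ α₁ β₀ β₁) : (α₁ × α₀) → ℂ := wvec t.2.2.1 t.1.1 t.1.2
def bvec (t : WIdx α₀ α₁ β₀ β₁) : (β₁ × β₀) → ℂ := wvec t.2.2.2 t.2.1.1 t.2.1.2
def zetaW (N : MatMap (α₀ × β₀) (α₁ × β₁)) (t : WIdx α₀ α₁ β₀ β₁) : ℂ :=
  jfun N t.1.1 t.1.2 t.2.1.1 t.2.1.2 * zcf t.2.2.1 * zcf t.2.2.2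
def rrW (N : MatMap (α₀ × β₀) (α₁ × β₁)) (t : WIdx α₀ α₁ β₀ β₁) : ℝ := (zetaW N t).re

lemma claim1 (N : MatMap (α₀ × β₀) (α₁ × β₁)) (x y : α₁ × α₀) (u v : β₁ × β₀) :
    jfun N x y u v = ∑ t : WIdx α₀ α₁ β₀ β₁,
      zetaW N t * (avec t x * (starRingEnd ℂ) (avec t y))
        * (bvec t u * (starRingEnd ℂ) (bvec t v)) := by
  have inner : ∀ (x' y' : α₁ × α₀) (u' v' : β₁ × β₀),
      (∑ cc : Fin 4 × Fin 4, (jfun N x' y' u' v' * zcf cc.1 * zcf cc.2)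
          * (wvec cc.1 x' y' x * (starRingEnd ℂ) (wvec cc.1 x' y' y))
          * (wvec cc.2 u' v' u * (starRingEnd ℂ) (wvec cc.2 u' v' v)))
      = jfun N x' y' u' v' * Matrix.single x' y' (1:ℂ) x y
          * Matrix.single u' v' (1:ℂ) u v := by
    intro x' y' u' v'
    rw [← stdBasis_decomp_entry x' y' x y, ← stdBasis_decomp_entry u' v' u v]
    rw [Fintype.sum_prod_type, mul_assoc, Finset.sum_mul_sum, Finset.mul_sum]
    apply Finset.sum_congr rfl; intro c _
    rw [Finset.mul_sum]
    apply Finset.sum_congr rfl; intro c' _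
    ring
  rw [Fintype.sum_prod_type]
  have step1 : ∀ p : (α₁ × α₀) × (α₁ × α₀),
      (∑ q : ((β₁ × β₀) × (β₁ × β₀)) × (Fin 4 × Fin 4),
        zetaW N (p, q) * (avec (p, q) x * (starRingEnd ℂ) (avec (p, q) y))
          * (bvec (p, q) u * (starRingEnd ℂ) (bvec (p, q) v)))
      = ∑ w : (β₁ × β₀) × (β₁ × β₀), jfun N p.1 p.2 w.1 w.2
          * Matrix.single p.1 p.2 (1:ℂ) x y
          * Matrix.single w.1 w.2 (1:ℂ) u v := by
    intro p
    rw [Fintype.sum_prod_type]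
    apply Finset.sum_congr rfl; intro w _
    exact inner p.1 p.2 w.1 w.2
  rw [Finset.sum_congr rfl (fun p _ => step1 p)]
  rw [Finset.sum_eq_single (x, y)]
  · rw [Finset.sum_eq_single (u, v)]
    · simp [Matrix.single]
    · intro w _ hw
      have : ¬(w.1 = u ∧ w.2 = v) := by
        rintro ⟨e1, e2⟩; exact hw (Prod.ext e1 e2)
      simp [Matrix.single, this]
    · intro h; exact absurd (Finset.mem_univ _) h
  · intro p _ hp
    apply Finset.sum_eq_zero; intro w _
    have : ¬(p.1 = x ∧ p.2 = y) := by
      rintro ⟨e1, e2⟩; exact hp (Prod.ext e1 e2)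
    simp [Matrix.single, this]
  · intro h; exact absurd (Finset.mem_univ _) h

lemma claim2 {N : MatMap (α₀ × β₀) (α₁ × β₁)} (hN : IsChannel N)
    (x y : α₁ × α₀) (u v : β₁ × β₀) :
    jfun N x y u v = ∑ t : WIdx α₀ α₁ β₀ β₁,
      ((rrW N t : ℝ) : ℂ) * ((avec t x * (starRingEnd ℂ) (avec t y))
        * (bvec t u * (starRingEnd ℂ) (bvec t v))) := by
  have h1 := claim1 N x y u v
  have h2 := congrArg (starRingEnd ℂ) (claim1 N y x v u)
  rw [jfun_herm hN y x v u, map_sum] at h2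
  have h2' : jfun N x y u v = ∑ t : WIdx α₀ α₁ β₀ β₁,
      (starRingEnd ℂ) (zetaW N t) * (avec t x * (starRingEnd ℂ) (avec t y))
        * (bvec t u * (starRingEnd ℂ) (bvec t v)) := by
    rw [h2]
    apply Finset.sum_congr rfl; intro t _
    simp only [_root_.map_mul, Complex.conj_conj]
    ring
  have hsum : (2:ℂ) * jfun N x y u v = ∑ t : WIdx α₀ α₁ β₀ β₁,
      (zetaW N t + (starRingEnd ℂ) (zetaW N t))
        * ((avec t x * (starRingEnd ℂ) (avec t y))
          * (bvec t u * (starRingEnd ℂ) (bvec t v))) := by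
    rw [two_mul]
    nth_rw 1 [h1]; nth_rw 1 [h2']
    rw [← Finset.sum_add_distrib]
    apply Finset.sum_congr rfl; intro t _
    ring
  have h3 : (2:ℂ) * jfun N x y u v = (2:ℂ) * ∑ t : WIdx α₀ α₁ β₀ β₁,
      ((rrW N t : ℝ) : ℂ) * ((avec t x * (starRingEnd ℂ) (avec t y))
        * (bvec t u * (starRingEnd ℂ) (bvec t v))) := by
    rw [hsum, Finset.mul_sum]
    apply Finset.sum_congr rfl; intro t _
    rw [Complex.add_conj]
    push_cast [rrW]
    ring
  exact mul_left_cancel₀ two_ne_zero h3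

def sWit (N : MatMap (α₀ × β₀) (α₁ × β₁)) : ℝ :=
  8 * (Fintype.card α₁) * (Fintype.card β₁)
    * ∑ t : WIdx α₀ α₁ β₀ β₁, (|rrW N t| - rrW N t)

lemma sWit_nonneg (N : MatMap (α₀ × β₀) (α₁ × β₁)) : 0 ≤ sWit N := by
  unfold sWit
  apply mul_nonneg
  · positivity
  · exact Finset.sum_nonneg fun t _ => by
      have := le_abs_self (rrW N t); linarith

def PmW (N : MatMap (α₀ × β₀) (α₁ × β₁)) (m : WIdx α₀ α₁ β₀ β₁ × Fin 3) :
    Matrix (α₁ × α₀) (α₁ × α₀) ℂ :=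
  ![ ((1 + sWit N)⁻¹ * ((|rrW N m.1| + rrW N m.1)/2))
        • Matrix.vecMulVec (avec m.1) (star (avec m.1)),
     ((1 + sWit N)⁻¹ * ((|rrW N m.1| - rrW N m.1)/2))
        • ((4:ℝ) • (1 : Matrix (α₁ × α₀) (α₁ × α₀) ℂ)
            - Matrix.vecMulVec (avec m.1) (star (avec m.1))),
     ((1 + sWit N)⁻¹ * ((|rrW N m.1| - rrW N m.1)/2))
        • Matrix.vecMulVec (avec m.1) (star (avec m.1)) ] m.2

def QmW (N : MatMap (α₀ × β₀) (α₁ × β₁)) (m : WIdx α₀ α₁ β₀ β₁ × Fin 3) :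
    Matrix (β₁ × β₀) (β₁ × β₀) ℂ :=
  ![ Matrix.vecMulVec (bvec m.1) (star (bvec m.1)),
     (4:ℝ) • (1 : Matrix (β₁ × β₀) (β₁ × β₀) ℂ),
     (4:ℝ) • (1 : Matrix (β₁ × β₀) (β₁ × β₀) ℂ)
        - Matrix.vecMulVec (bvec m.1) (star (bvec m.1)) ] m.2

lemma PmW_psd (N : MatMap (α₀ × β₀) (α₁ × β₁)) (m : WIdx α₀ α₁ β₀ β₁ × Fin 3) :
    (PmW N m).PosSemidef := by
  have hinv : (0:ℝ) ≤ (1 + sWit N)⁻¹ :=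
    inv_nonneg.mpr (by linarith [sWit_nonneg N])
  have hplus : (0:ℝ) ≤ (|rrW N m.1| + rrW N m.1)/2 := by
    have := neg_abs_le (rrW N m.1); linarith
  have hminus : (0:ℝ) ≤ (|rrW N m.1| - rrW N m.1)/2 := by
    have := le_abs_self (rrW N m.1); linarith
  have hsub : ((4:ℝ) • (1 : Matrix (α₁ × α₀) (α₁ × α₀) ℂ)
      - Matrix.vecMulVec (avec m.1) (star (avec m.1))).PosSemidef :=
    psd_smul_one_sub_vecMulVec _ (wvec_normSq_le _ _ _)
  obtain ⟨t, j⟩ := m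
  fin_cases j <;>
    simp only [PmW, Matrix.cons_val_zero, Matrix.cons_val_one, Matrix.head_cons,
      Matrix.cons_val_two, Matrix.tail_cons]
  · exact psd_real_smul (psd_vecMulVec _) (mul_nonneg hinv hplus)
  · exact psd_real_smul hsub (mul_nonneg hinv hminus)
  · exact psd_real_smul (psd_vecMulVec _) (mul_nonneg hinv hminus)

lemma QmW_psd (N : MatMap (α₀ × β₀) (α₁ × β₁)) (m : WIdx α₀ α₁ β₀ β₁ × Fin 3) :
    (QmW N m).PosSemidef := by
  obtain ⟨t, j⟩ := m
  fin_cases j <;>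
    simp only [QmW, Matrix.cons_val_zero, Matrix.cons_val_one, Matrix.head_cons,
      Matrix.cons_val_two, Matrix.tail_cons]
  · exact psd_vecMulVec _
  · exact psd_real_smul Matrix.PosSemidef.one (by norm_num)
  · exact psd_smul_one_sub_vecMulVec _ (wvec_normSq_le _ _ _)

lemma claim3 [Nonempty α₁] [Nonempty β₁] {N : MatMap (α₀ × β₀) (α₁ × β₁)} (hN : IsChannel N)
    (x y : α₁ × α₀) (u v : β₁ × β₀) :
    ∑ m : WIdx α₀ α₁ β₀ β₁ × Fin 3, PmW N m x y * QmW N m u v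
      = ((((1 + sWit N)⁻¹ : ℝ)) : ℂ) * (jfun N x y u v
          + (((sWit N / ((Fintype.card α₁) * (Fintype.card β₁)) : ℝ)) : ℂ)
            * ((if x = y then (1:ℂ) else 0) * (if u = v then (1:ℂ) else 0))) := by
  have dA0 : (0:ℝ) < (Fintype.card α₁ : ℝ) := by exact_mod_cast Fintype.card_pos
  have dB0 : (0:ℝ) < (Fintype.card β₁ : ℝ) := by exact_mod_cast Fintype.card_pos
  have hper : ∀ t : WIdx α₀ α₁ β₀ β₁,
      (∑ j : Fin 3, PmW N (t, j) x y * QmW N (t, j) u v)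
      = ((((1 + sWit N)⁻¹ : ℝ)) : ℂ) * (((rrW N t : ℝ) : ℂ)
            * ((avec t x * (starRingEnd ℂ) (avec t y))
              * (bvec t u * (starRingEnd ℂ) (bvec t v)))
          + ((8 * (|rrW N t| - rrW N t) : ℝ) : ℂ)
            * ((if x = y then (1:ℂ) else 0) * (if u = v then (1:ℂ) else 0))) := by
    intro t
    rw [Fin.sum_univ_three]
    simp only [PmW, QmW, Matrix.cons_val_zero, Matrix.cons_val_one, Matrix.head_cons,
      Matrix.cons_val_two, Matrix.tail_cons, Matrix.smul_apply, Matrix.sub_apply,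
      Matrix.one_apply, Matrix.vecMulVec_apply, Pi.star_apply, smul_eq_mul,
      Complex.real_smul, RCLike.star_def]
    push_cast
    ring
  rw [Fintype.sum_prod_type, Finset.sum_congr rfl (fun t _ => hper t), ← Finset.mul_sum]
  congr 1
  rw [Finset.sum_add_distrib]
  congr 1
  · exact (claim2 hN x y u v).symm
  · rw [← Finset.sum_mul]
    congr 1
    have hs : (sWit N / ((Fintype.card α₁) * (Fintype.card β₁)) : ℝ)
        = ∑ t : WIdx α₀ α₁ β₀ β₁, 8 * (|rrW N t| - rrW N t) := by
      unfold sWit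
      rw [show (∑ t : WIdx α₀ α₁ β₀ β₁, 8 * (|rrW N t| - rrW N t))
          = 8 * ∑ t : WIdx α₀ α₁ β₀ β₁, (|rrW N t| - rrW N t) from (Finset.mul_sum _ _ _).symm]
      field_simp
    rw [hs]
    push_cast
    rfl


lemma ite_pair {A B : Type} [DecidableEq A] [DecidableEq B] (P Q : A) (a b : B) :
    (if (P, a) = (Q, b) then (1:ℂ) else 0)
      = (if P = Q then (1:ℂ) else 0) * (if a = b then (1:ℂ) else 0) := by
  by_cases h1 : P = Q <;> by_cases h2 : a = b <;> simp [h1, h2, Prod.ext_iff]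

lemma quad_to_pair (g : (α₀ × β₀) → (α₀ × β₀) → ℂ) :
    (∑ i : α₀, ∑ j : α₀, ∑ k : β₀, ∑ l : β₀, g (i, k) (j, l))
      = ∑ ab : (α₀ × β₀) × (α₀ × β₀), g ab.1 ab.2 := by
  conv_rhs => simp only [Fintype.sum_prod_type]
  apply Finset.sum_congr rfl; intro i _
  exact Finset.sum_comm

lemma tensorMap_AofChoi_apply (P : Matrix (α₁ × α₀) (α₁ × α₀) ℂ)
    (Q : Matrix (β₁ × β₀) (β₁ × β₀) ℂ) (X : Matrix (α₀ × β₀) (α₀ × β₀) ℂ)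
    (p q : α₁) (rr ss : β₁) :
    tensorMap (AofChoi P) (AofChoi Q) X (p, rr) (q, ss)
      = ∑ ab : (α₀ × β₀) × (α₀ × β₀),
          X ab.1 ab.2 * (P (p, ab.1.1) (q, ab.2.1) * Q (rr, ab.1.2) (ss, ab.2.2)) := by
  unfold tensorMap
  simp only [Matrix.sum_apply, Matrix.smul_apply, Matrix.kroneckerMap_apply, smul_eq_mul,
    AofChoi_apply_std]
  exact quad_to_pair (fun a b => X a b * (P (p, a.1) (q, b.1) * Q (rr, a.2) (ss, b.2)))

lemma expand_entry {ι₁ : Type} {N : MatMap (α₀ × β₀) ι₁} (hlin : IsLinearFun N)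
    (X : Matrix (α₀ × β₀) (α₀ × β₀) ℂ) (P Q : ι₁) :
    N X P Q = ∑ ab : (α₀ × β₀) × (α₀ × β₀),
      X ab.1 ab.2 * N (Matrix.single ab.1 ab.2 1) P Q := by
  conv_lhs => rw [Matrix.matrix_eq_sum_single X]
  rw [hlin.sum, Matrix.sum_apply]
  conv_rhs => rw [Fintype.sum_prod_type]
  apply Finset.sum_congr rfl; intro a _
  rw [hlin.sum, Matrix.sum_apply]
  apply Finset.sum_congr rfl; intro b _
  rw [show Matrix.single a b (X a b) = X a b • Matrix.single a b 1 by
    rw [Matrix.smul_single, smul_eq_mul, mul_one]]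
  rw [hlin.smul, Matrix.smul_apply, smul_eq_mul]

/-- The completely depolarizing bipartite channel. -/
def depolW : MatMap (α₀ × β₀) (α₁ × β₁) := fun X =>
  (X.trace / ((Fintype.card α₁ : ℂ) * (Fintype.card β₁ : ℂ))) • 1

lemma depolW_entry (X : Matrix (α₀ × β₀) (α₀ × β₀) ℂ) (P Q : α₁ × β₁) :
    depolW (α₁ := α₁) (β₁ := β₁) X P Q
      = ∑ ab : (α₀ × β₀) × (α₀ × β₀), X ab.1 ab.2
          * ((Fintype.card α₁ : ℂ) * (Fintype.card β₁ : ℂ))⁻¹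
          * ((if P = Q then (1:ℂ) else 0) * (if ab.1 = ab.2 then (1:ℂ) else 0)) := by
  have h1 : depolW (α₁ := α₁) (β₁ := β₁) X P Q
      = X.trace / ((Fintype.card α₁ : ℂ) * (Fintype.card β₁ : ℂ))
          * (if P = Q then (1:ℂ) else 0) := by
    simp [depolW, Matrix.smul_apply, Matrix.one_apply, smul_eq_mul]
  rw [h1, Fintype.sum_prod_type]
  rw [Finset.sum_congr rfl (fun a (_ : a ∈ Finset.univ) => Finset.sum_eq_single a
    (fun b _ hb => by simp [Ne.symm hb])
    (fun h => absurd (Finset.mem_univ a) h))]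
  simp only [eq_self_iff_true, if_true, mul_one]
  rw [show (∑ a : α₀ × β₀, X a a * ((Fintype.card α₁ : ℂ) * (Fintype.card β₁ : ℂ))⁻¹
        * ((if P = Q then (1:ℂ) else 0)))
      = (∑ a : α₀ × β₀, X a a) * ((Fintype.card α₁ : ℂ) * (Fintype.card β₁ : ℂ))⁻¹
        * ((if P = Q then (1:ℂ) else 0)) by
    rw [Finset.sum_mul, Finset.sum_mul]]
  rw [Matrix.trace]
  simp only [Matrix.diag]
  ring

lemma depolW_channel [Nonempty α₁] [Nonempty β₁] :
    IsChannel (depolW (α₀ := α₀) (β₀ := β₀) (α₁ := α₁) (β₁ := β₁)) := by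
  have hA : (Fintype.card α₁ : ℂ) ≠ 0 := Nat.cast_ne_zero.mpr Fintype.card_ne_zero
  have hB : (Fintype.card β₁ : ℂ) ≠ 0 := Nat.cast_ne_zero.mpr Fintype.card_ne_zero
  refine ⟨?_, ?_, ?_⟩
  · intro c X Y
    unfold depolW
    rw [Matrix.trace_add, Matrix.trace_smul]
    ext P Q
    simp only [Matrix.smul_apply, Matrix.add_apply, smul_eq_mul]
    ring
  · have heq : depolW (α₀ := α₀) (β₀ := β₀) (α₁ := α₁) (β₁ := β₁)
        = AofChoi ((((Fintype.card α₁ : ℝ) * (Fintype.card β₁ : ℝ))⁻¹ : ℝ)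
            • (1 : Matrix ((α₁ × β₁) × (α₀ × β₀)) ((α₁ × β₁) × (α₀ × β₀)) ℂ)) := by
      funext X
      ext P Q
      show depolW X P Q = ∑ a : α₀ × β₀, ∑ b : α₀ × β₀, X a b
          * ((((Fintype.card α₁ : ℝ) * (Fintype.card β₁ : ℝ))⁻¹ : ℝ)
              • (1 : Matrix ((α₁ × β₁) × (α₀ × β₀)) ((α₁ × β₁) × (α₀ × β₀)) ℂ)) (P, a) (Q, b)
      rw [depolW_entry, Fintype.sum_prod_type]
      apply Finset.sum_congr rfl; intro a _
      apply Finset.sum_congr rfl; intro b _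
      rw [Matrix.smul_apply, Matrix.one_apply, ite_pair P Q a b]
      simp only [smul_eq_mul, Complex.real_smul]
      push_cast
      ring
    rw [heq]
    exact AofChoi_cp (psd_real_smul Matrix.PosSemidef.one (by positivity))
  · intro X
    unfold depolW
    rw [Matrix.trace_smul, Matrix.trace_one, smul_eq_mul, Fintype.card_prod]
    push_cast
    field_simp

lemma depolW_sep [Nonempty α₁] [Nonempty β₁] :
    IsSepChannel (depolW (α₀ := α₀) (β₀ := β₀) (α₁ := α₁) (β₁ := β₁)) := by
  refine ⟨depolW_channel, 1,
    fun _ => AofChoi (((Fintype.card α₁ : ℝ)⁻¹ : ℝ) • (1 : Matrix (α₁ × α₀) (α₁ × α₀) ℂ)),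
    fun _ => AofChoi (((Fintype.card β₁ : ℝ)⁻¹ : ℝ) • (1 : Matrix (β₁ × β₀) (β₁ × β₀) ℂ)),
    ?_, ?_⟩
  · intro k
    exact ⟨AofChoi_linear _, AofChoi_cp (psd_real_smul Matrix.PosSemidef.one (by positivity)),
      AofChoi_linear _, AofChoi_cp (psd_real_smul Matrix.PosSemidef.one (by positivity))⟩
  · intro X
    rw [Fin.sum_univ_one]
    ext PQ P'Q'
    obtain ⟨p, rr⟩ := PQ
    obtain ⟨q, ss⟩ := P'Q'
    rw [tensorMap_AofChoi_apply, depolW_entry]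
    apply Finset.sum_congr rfl; intro ab _
    have hab : (if ab.1 = ab.2 then (1:ℂ) else 0)
        = (if ab.1.1 = ab.2.1 then (1:ℂ) else 0) * (if ab.1.2 = ab.2.2 then (1:ℂ) else 0) := by
      by_cases h1 : ab.1.1 = ab.2.1 <;> by_cases h2 : ab.1.2 = ab.2.2 <;>
        simp [h1, h2, Prod.ext_iff]
    simp only [Matrix.smul_apply, Matrix.one_apply, smul_eq_mul, Complex.real_smul]
    rw [ite_pair p q rr ss, hab, ite_pair p q ab.1.1 ab.2.1, ite_pair rr ss ab.1.2 ab.2.2]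
    push_cast
    ring


lemma witness_main [Nonempty α₁] [Nonempty β₁]
    {N : MatMap (α₀ × β₀) (α₁ × β₁)} (hN : IsChannel N) :
    IsSepChannel (fun X => (1 + sWit N)⁻¹ • (N X + sWit N • depolW X)) := by
  constructor
  · exact hN.mix depolW_channel (sWit_nonneg N)
  · refine ⟨Fintype.card (WIdx α₀ α₁ β₀ β₁ × Fin 3),
      fun k => AofChoi (PmW N ((Fintype.equivFin (WIdx α₀ α₁ β₀ β₁ × Fin 3)).symm k)),
      fun k => AofChoi (QmW N ((Fintype.equivFin (WIdx α₀ α₁ β₀ β₁ × Fin 3)).symm k)),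
      ?_, ?_⟩
    · intro k
      exact ⟨AofChoi_linear _, AofChoi_cp (PmW_psd N _),
        AofChoi_linear _, AofChoi_cp (QmW_psd N _)⟩
    · intro X
      rw [Equiv.sum_comp (Fintype.equivFin (WIdx α₀ α₁ β₀ β₁ × Fin 3)).symm
        (fun m => tensorMap (AofChoi (PmW N m)) (AofChoi (QmW N m)) X)]
      ext PQ P'Q'
      obtain ⟨p, rr⟩ := PQ
      obtain ⟨q, ss⟩ := P'Q'
      rw [Matrix.sum_apply]
      rw [Finset.sum_congr rfl
        (fun m (_ : m ∈ Finset.univ) => tensorMap_AofChoi_apply (PmW N m) (QmW N m) X p q rr ss)]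
      rw [Finset.sum_comm]
      have hstep : ∀ ab : (α₀ × β₀) × (α₀ × β₀),
          (∑ m : WIdx α₀ α₁ β₀ β₁ × Fin 3, X ab.1 ab.2
            * (PmW N m (p, ab.1.1) (q, ab.2.1) * QmW N m (rr, ab.1.2) (ss, ab.2.2)))
          = X ab.1 ab.2 * ((((1 + sWit N)⁻¹ : ℝ)) : ℂ)
              * (jfun N (p, ab.1.1) (q, ab.2.1) (rr, ab.1.2) (ss, ab.2.2)
                + (((sWit N / ((Fintype.card α₁) * (Fintype.card β₁)) : ℝ)) : ℂ)
                  * ((if (p, ab.1.1) = (q, ab.2.1) then (1:ℂ) else 0)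
                    * (if (rr, ab.1.2) = (ss, ab.2.2) then (1:ℂ) else 0))) := by
        intro ab
        rw [← Finset.mul_sum, claim3 hN (p, ab.1.1) (q, ab.2.1) (rr, ab.1.2) (ss, ab.2.2)]
        ring
      rw [Finset.sum_congr rfl (fun ab _ => hstep ab)]
      -- left-hand side
      show ((1 + sWit N)⁻¹ • (N X + sWit N • depolW X) :
        Matrix (α₁ × β₁) (α₁ × β₁) ℂ) (p, rr) (q, ss) = _
      rw [Matrix.smul_apply, Matrix.add_apply, Matrix.smul_apply]
      rw [expand_entry hN.1 X ((p, rr)) ((q, ss)), depolW_entry X (p, rr) (q, ss)]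
      rw [show ((sWit N) • (∑ ab : (α₀ × β₀) × (α₀ × β₀), X ab.1 ab.2
            * ((Fintype.card α₁ : ℂ) * (Fintype.card β₁ : ℂ))⁻¹
            * ((if (p, rr) = (q, ss) then (1:ℂ) else 0)
              * (if ab.1 = ab.2 then (1:ℂ) else 0))))
          = ∑ ab : (α₀ × β₀) × (α₀ × β₀), (sWit N : ℂ) * (X ab.1 ab.2
            * ((Fintype.card α₁ : ℂ) * (Fintype.card β₁ : ℂ))⁻¹
            * ((if (p, rr) = (q, ss) then (1:ℂ) else 0)
              * (if ab.1 = ab.2 then (1:ℂ) else 0))) by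
        rw [Complex.real_smul, Finset.mul_sum]]
      rw [← Finset.sum_add_distrib]
      rw [show (((1 + sWit N)⁻¹ : ℝ) • (∑ ab : (α₀ × β₀) × (α₀ × β₀),
            (X ab.1 ab.2 * N (Matrix.single ab.1 ab.2 1) (p, rr) (q, ss)
              + (sWit N : ℂ) * (X ab.1 ab.2
                * ((Fintype.card α₁ : ℂ) * (Fintype.card β₁ : ℂ))⁻¹
                * ((if (p, rr) = (q, ss) then (1:ℂ) else 0)
                  * (if ab.1 = ab.2 then (1:ℂ) else 0))))))
          = ∑ ab : (α₀ × β₀) × (α₀ × β₀), ((((1 + sWit N)⁻¹ : ℝ)) : ℂ)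
              * (X ab.1 ab.2 * N (Matrix.single ab.1 ab.2 1) (p, rr) (q, ss)
              + (sWit N : ℂ) * (X ab.1 ab.2
                * ((Fintype.card α₁ : ℂ) * (Fintype.card β₁ : ℂ))⁻¹
                * ((if (p, rr) = (q, ss) then (1:ℂ) else 0)
                  * (if ab.1 = ab.2 then (1:ℂ) else 0)))) by
        rw [Complex.real_smul, Finset.mul_sum]]
      apply Finset.sum_congr rfl; intro ab _
      have hj : jfun N (p, ab.1.1) (q, ab.2.1) (rr, ab.1.2) (ss, ab.2.2)
          = N (Matrix.single ab.1 ab.2 1) (p, rr) (q, ss) := rfl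
      have hab : (if ab.1 = ab.2 then (1:ℂ) else 0)
          = (if ab.1.1 = ab.2.1 then (1:ℂ) else 0) * (if ab.1.2 = ab.2.2 then (1:ℂ) else 0) := by
        by_cases h1 : ab.1.1 = ab.2.1 <;> by_cases h2 : ab.1.2 = ab.2.2 <;>
          simp [h1, h2, Prod.ext_iff]
      rw [hj, hab, ite_pair p q rr ss, ite_pair p q ab.1.1 ab.2.1,
        ite_pair rr ss ab.1.2 ab.2.2]
      push_cast
      ring

lemma exists_witness {N : MatMap (α₀ × β₀) (α₁ × β₁)} (hN : IsChannel N) :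
    ∃ s : ℝ, 0 ≤ s ∧ ∃ M : MatMap (α₀ × β₀) (α₁ × β₁), IsSepChannel M ∧
      IsSepChannel (fun X => (1 + s)⁻¹ • (N X + s • M X)) := by
  by_cases hne : Nonempty (α₀ × β₀)
  · -- nonempty input: the main construction
    have hne1 : Nonempty (α₁ × β₁) := by
      by_contra h
      have he : IsEmpty (α₁ × β₁) := not_nonempty_iff.mp h
      have htr := hN.2.2 (1 : Matrix (α₀ × β₀) (α₀ × β₀) ℂ)
      rw [Matrix.trace_one] at htr
      have h0 : (N 1).trace = 0 := by
        unfold Matrix.trace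
        exact Finset.sum_of_isEmpty _
      rw [h0] at htr
      have : Fintype.card (α₀ × β₀) = 0 := by exact_mod_cast htr.symm
      exact absurd this (Fintype.card_ne_zero (α := α₀ × β₀))
    haveI : Nonempty α₁ := ⟨(Classical.choice hne1).1⟩
    haveI : Nonempty β₁ := ⟨(Classical.choice hne1).2⟩
    exact ⟨sWit N, sWit_nonneg N, depolW, depolW_sep, witness_main hN⟩
  · -- empty input space: everything is trivial
    haveI : IsEmpty (α₀ × β₀) := not_nonempty_iff.mp hne
    have hN0 : ∀ X : Matrix (α₀ × β₀) (α₀ × β₀) ℂ, N X = 0 := by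
      intro X
      have hX0 : X = 0 := by ext i j; exact (IsEmpty.false i).elim
      rw [hX0, hN.1.zero]
    have hsep : IsSepChannel N := by
      refine ⟨hN, 0, Fin.elim0, Fin.elim0, fun k => k.elim0, fun X => ?_⟩
      rw [hN0 X]
      simp
    refine ⟨0, le_refl 0, N, hsep, ?_⟩
    have heq : (fun X => (1 + (0:ℝ))⁻¹ • (N X + (0:ℝ) • N X)) = N := by
      funext X; simp
    rw [heq]
    exact hsep


end Witness


section Statements


variable {α₀ β₀ α₁ β₁ α₀' β₀' α₁' β₁' : Type}
variable [Fintype α₀] [DecidableEq α₀] [Fintype β₀] [DecidableEq β₀]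
variable [Fintype α₁] [DecidableEq α₁] [Fintype β₁] [DecidableEq β₁]
variable [Fintype α₀'] [DecidableEq α₀'] [Fintype β₀'] [DecidableEq β₀']
variable [Fintype α₁'] [DecidableEq α₁'] [Fintype β₁'] [DecidableEq β₁']

theorem stmt0
    (Θ : Superchannel α₀ β₀ α₁ β₁ α₀' β₀' α₁' β₁') (hΘ : IsSEPPSC Θ)
    (N : MatMap (α₀ × β₀) (α₁ × β₁)) (hN : IsChannel N) :
    stdRobustness (Θ.apply N) ≤ stdRobustness N ∧
    genRobustness (Θ.apply N) ≤ genRobustness N := by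
  obtain ⟨s₀, hs₀, M₀, hM₀, hmix₀⟩ := exists_witness hN
  constructor
  · unfold stdRobustness
    apply csInf_le_csInf
    · exact ⟨0, fun x hx => hx.1⟩
    · exact ⟨s₀, hs₀, M₀, hM₀, hmix₀⟩
    · rintro s ⟨hs, M, hM, hmix⟩
      refine ⟨hs, Θ.apply M, hΘ M hM, ?_⟩
      have h := hΘ _ hmix
      rwa [Θ.apply_mix N M s] at h
  · unfold genRobustness
    apply csInf_le_csInf
    · exact ⟨0, fun x hx => hx.1⟩
    · exact ⟨s₀, hs₀, M₀, hM₀.1, hmix₀⟩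
    · rintro s ⟨hs, M, hM, hmix⟩
      refine ⟨hs, Θ.apply M, Θ.apply_channel hM, ?_⟩
      have h := hΘ _ hmix
      rwa [Θ.apply_mix N M s] at h

end Statements

end DynEnt
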